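/- For every α ≥ e (where e is Euler's number), every Facility Location game with β_v > 0 for all nodes v (with weighted agents and arbitrary nonnegative connection costs) has an α-approximate strong equilibrium. -/

import Mathlib

open Finset
open scoped Classical

/-- A Facility Location game: nodes `V`, agents `A`, connection costs `d`,
facility opening costs `β`, agent locations `u` and positive weights `w`. -/
structure FLGame (V A : Type*) [Fintype V] [Fintype A] where
  d : V → V → ℝ
  d_nonneg : ∀ x y, 0 ≤ d x y
  β : V → ℝ
  β_nonneg : ∀ v, 0 ≤ β v
  u : A → V
  w : A → ℝ
  w_pos : ∀ i, 0 < w i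
  V_nonempty : Nonempty V
  A_nonempty : Nonempty A

namespace FLGame

variable {V A : Type*} [Fintype V] [Fintype A]

/-- Total weight forwarded to node `v` under profile `s`. -/
noncomputable def Wmass (G : FLGame V A) (s : A → V) (v : V) : ℝ :=
  ∑ j, if s j = v then G.w j else 0

/-- Individual cost of agent `i` under profile `s`. -/
noncomputable def cost (G : FLGame V A) (s : A → V) (i : A) : ℝ :=
  G.w i * G.d (G.u i) (s i) + G.w i * G.β (s i) / G.Wmass s (s i)

/-- Social cost of profile `s`. -/
noncomputable def social (G : FLGame V A) (s : A → V) : ℝ := ∑ i, G.cost s i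

/-- All agents have unit weight. -/
def Unweighted (G : FLGame V A) : Prop := ∀ i, G.w i = 1

/-- `d` is a metric on `V`. -/
def Metric (G : FLGame V A) : Prop :=
  (∀ x, G.d x x = 0) ∧ (∀ x y, G.d x y = G.d y x) ∧ (∀ x y, 0 ≤ G.d x y) ∧
    (∀ x y z, G.d x z ≤ G.d x y + G.d y z)

/-- `s'` is obtained from `s` by a best-response move of agent `i`. -/
def BRMove (G : FLGame V A) (s s' : A → V) (i : A) : Prop :=
  (∀ j, j ≠ i → s' j = s j) ∧ G.cost s' i < G.cost s i ∧
    (∀ s'' : A → V, (∀ j, j ≠ i → s'' j = s j) → G.cost s' i ≤ G.cost s'' i)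

/-- `s` is reached from `s0` by iterative best response. -/
def ReachedByIBR (G : FLGame V A) (s0 s : A → V) : Prop :=
  ∃ (T : ℕ) (seq : ℕ → A → V), seq 0 = s0 ∧ seq T = s ∧
    ∀ t, t < T → ∃ i, G.BRMove (seq t) (seq (t + 1)) i

/-- `s` is a pure Nash equilibrium. -/
def IsPNE (G : FLGame V A) (s : A → V) : Prop :=
  ∀ (i : A) (v : V), G.cost s i ≤ G.cost (Function.update s i v) i

/-- The nonempty coalition `I` deviates from `s` to `s'`, every member improving
by a factor strictly more than `α`. -/
def CoalDev (G : FLGame V A) (α : ℝ) (s s' : A → V) (I : Finset A) : Prop :=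
  I.Nonempty ∧ (∀ j ∉ I, s' j = s j) ∧ ∀ i ∈ I, α * G.cost s' i < G.cost s i

/-- `s` is an `α`-approximate strong equilibrium. -/
def ApproxSE (G : FLGame V A) (α : ℝ) (s : A → V) : Prop :=
  ¬ ∃ (I : Finset A) (s' : A → V), G.CoalDev α s s' I

end FLGame

/-- For every `α ≥ e`, every Facility Location game with positive
facility costs (weighted agents, general networks) has an `α`-approximate strong
equilibrium. -/
theorem stmt11 {V A : Type*} [Fintype V] [Fintype A] (G : FLGame V A)
    (hβ : ∀ v, 0 < G.β v) (α : ℝ) (hα : Real.exp 1 ≤ α) :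
    ∃ s : A → V, G.ApproxSE α s := by
  classical
  have hNV : Nonempty V := G.V_nonempty
  have hNs : Nonempty (A → V) := ⟨fun _ => Classical.arbitrary V⟩
  have hαpos : (0:ℝ) < α := lt_of_lt_of_le (Real.exp_pos 1) hα
  -- basic positivity facts
  have hWnn : ∀ (t : A → V) (v : V), 0 ≤ G.Wmass t v := by
    intro t v
    apply Finset.sum_nonneg
    intro j _
    by_cases h : t j = v <;> simp [h, (G.w_pos j).le]
  have hWself : ∀ (t : A → V) (i : A), G.w i ≤ G.Wmass t (t i) := by
    intro t i
    have h := Finset.single_le_sum (f := fun j => if t j = t i then G.w j else 0)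
      (fun j _ => by by_cases h : t j = t i <;> simp [h, (G.w_pos j).le]) (Finset.mem_univ i)
    simpa [FLGame.Wmass] using h
  have hWpos : ∀ (t : A → V) (i : A), 0 < G.Wmass t (t i) := fun t i =>
    lt_of_lt_of_le (G.w_pos i) (hWself t i)
  have hcpos : ∀ (t : A → V) (i : A), 0 < G.cost t i := by
    intro t i
    have h1 : 0 ≤ G.w i * G.d (G.u i) (t i) := mul_nonneg (G.w_pos i).le (G.d_nonneg _ _)
    have h2 : 0 < G.w i * G.β (t i) / G.Wmass t (t i) :=
      div_pos (mul_pos (G.w_pos i) (hβ _)) (hWpos t i)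
    unfold FLGame.cost
    linarith
  -- the potential: weighted sum of log-costs; pick a minimizer
  obtain ⟨s, hmin⟩ := Finite.exists_min (fun t : A → V => ∑ i, G.w i * Real.log (G.cost t i))
  refine ⟨s, ?_⟩
  rintro ⟨I, s', hne, hfix, himp⟩
  -- coalition weight and outsider weight at each node (under s)
  set L : V → ℝ := fun a => ∑ i ∈ I, if s i = a then G.w i else 0 with hLdef
  set Y : V → ℝ := fun a => ∑ j ∈ Iᶜ, if s j = a then G.w j else 0 with hYdef
  have hLnn : ∀ a, 0 ≤ L a := by
    intro a
    apply Finset.sum_nonneg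
    intro j _
    by_cases h : s j = a <;> simp [h, (G.w_pos j).le]
  have hYnn : ∀ a, 0 ≤ Y a := by
    intro a
    apply Finset.sum_nonneg
    intro j _
    by_cases h : s j = a <;> simp [h, (G.w_pos j).le]
  have hWLY : ∀ a, G.Wmass s a = L a + Y a := by
    intro a
    rw [show G.Wmass s a = ∑ j, if s j = a then G.w j else 0 from rfl]
    exact (Finset.sum_add_sum_compl I _).symm
  -- outsiders keep at least Y a total weight at node a under s'
  have hYs' : ∀ a, Y a ≤ G.Wmass s' a := by
    intro a
    have h1 : Y a = ∑ j ∈ Iᶜ, (if s' j = a then G.w j else 0) := by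
      refine Finset.sum_congr rfl fun j hj => ?_
      rw [hfix j (Finset.mem_compl.mp hj)]
    rw [h1, show G.Wmass s' a = ∑ j, if s' j = a then G.w j else 0 from rfl]
    refine Finset.sum_le_sum_of_subset_of_nonneg (Finset.subset_univ _) fun j _ _ => ?_
    by_cases h : s' j = a <;> simp [h, (G.w_pos j).le]
  have hYj : ∀ j ∉ I, G.w j ≤ Y (s j) := by
    intro j hj
    have h := Finset.single_le_sum (f := fun j' => if s j' = s j then G.w j' else 0)
      (fun j' _ => by by_cases h : s j' = s j <;> simp [h, (G.w_pos j').le])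
      (Finset.mem_compl.mpr hj)
    simpa using h
  -- Bound A: coalition members
  have hA : ∀ i ∈ I, G.w i * Real.log (G.cost s' i) < G.w i * Real.log (G.cost s i) - G.w i := by
    intro i hi
    have h1 : α * G.cost s' i < G.cost s i := himp i hi
    have hc' := hcpos s' i
    have h2 : Real.log (α * G.cost s' i) < Real.log (G.cost s i) :=
      Real.log_lt_log (mul_pos hαpos hc') h1
    rw [Real.log_mul (ne_of_gt hαpos) (ne_of_gt hc')] at h2
    have h3 : (1:ℝ) ≤ Real.log α := by
      rw [Real.le_log_iff_exp_le hαpos]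
      exact hα
    have h4 : Real.log (G.cost s' i) < Real.log (G.cost s i) - 1 := by linarith
    have h5 := mul_lt_mul_of_pos_left h4 (G.w_pos i)
    rw [mul_sub, mul_one] at h5
    exact h5
  have hAsum : ∑ i ∈ I, G.w i * Real.log (G.cost s' i) <
      ∑ i ∈ I, (G.w i * Real.log (G.cost s i) - G.w i) :=
    Finset.sum_lt_sum_of_nonempty hne hA
  -- Bound B: outsiders
  have hB : ∀ j ∈ Iᶜ, G.w j * Real.log (G.cost s' j) ≤
      G.w j * Real.log (G.cost s j) +
        G.w j * (Real.log (G.Wmass s (s j)) - Real.log (Y (s j))) := by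
    intro j hj
    have hjI : j ∉ I := Finset.mem_compl.mp hj
    have hsj : s' j = s j := hfix j hjI
    have hY0 : 0 < Y (s j) := lt_of_lt_of_le (G.w_pos j) (hYj j hjI)
    have hWa : 0 < G.Wmass s (s j) := hWpos s j
    have hYW : Y (s j) ≤ G.Wmass s (s j) := by
      rw [hWLY (s j)]
      have := hLnn (s j)
      linarith
    have hYs'j : Y (s j) ≤ G.Wmass s' (s j) := hYs' (s j)
    have hW'pos : 0 < G.Wmass s' (s j) := lt_of_lt_of_le hY0 hYs'j
    have hBB : 0 ≤ G.w j * G.β (s j) := mul_nonneg (G.w_pos j).le (hβ _).le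
    have hD : 0 ≤ G.w j * G.d (G.u j) (s j) := mul_nonneg (G.w_pos j).le (G.d_nonneg _ _)
    -- key multiplicative bound on the cost of an outsider
    have hkey : G.cost s' j ≤ G.cost s j * (G.Wmass s (s j) / Y (s j)) := by
      unfold FLGame.cost
      rw [hsj]
      have t1 : G.w j * G.β (s j) / G.Wmass s' (s j) ≤ G.w j * G.β (s j) / Y (s j) := by
        rw [div_le_div_iff₀ hW'pos hY0]
        nlinarith [mul_le_mul_of_nonneg_left hYs'j hBB]
      have t2 : (1:ℝ) ≤ G.Wmass s (s j) / Y (s j) := (one_le_div hY0).mpr hYW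
      have t3 : (G.w j * G.d (G.u j) (s j) + G.w j * G.β (s j) / G.Wmass s (s j)) *
            (G.Wmass s (s j) / Y (s j))
          = G.w j * G.d (G.u j) (s j) * (G.Wmass s (s j) / Y (s j)) +
            G.w j * G.β (s j) / Y (s j) := by
        field_simp
        try ring
      have t4 : G.w j * G.d (G.u j) (s j) * 1 ≤
          G.w j * G.d (G.u j) (s j) * (G.Wmass s (s j) / Y (s j)) :=
        mul_le_mul_of_nonneg_left t2 hD
      rw [mul_one] at t4
      rw [t3]
      linarith
    have hcj := hcpos s j
    have hc'j := hcpos s' j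
    have h2 : Real.log (G.cost s' j) ≤ Real.log (G.cost s j * (G.Wmass s (s j) / Y (s j))) :=
      Real.log_le_log hc'j hkey
    rw [Real.log_mul (ne_of_gt hcj) (ne_of_gt (div_pos hWa hY0)),
      Real.log_div (ne_of_gt hWa) (ne_of_gt hY0)] at h2
    have h5 := mul_le_mul_of_nonneg_left h2 (G.w_pos j).le
    rw [mul_add] at h5
    exact h5
  -- regroup the outsider correction terms by node
  set g : V → ℝ := fun a => Real.log (G.Wmass s a) - Real.log (Y a) with hgdef
  have hgroup : ∑ j ∈ Iᶜ, G.w j * g (s j) = ∑ a, Y a * g a := by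
    calc ∑ j ∈ Iᶜ, G.w j * g (s j)
        = ∑ j ∈ Iᶜ, ∑ a, (if s j = a then G.w j * g a else 0) := by
          refine Finset.sum_congr rfl fun j _ => ?_
          rw [Finset.sum_ite_eq]
          simp
      _ = ∑ a, ∑ j ∈ Iᶜ, (if s j = a then G.w j * g a else 0) := Finset.sum_comm
      _ = ∑ a, Y a * g a := by
          refine Finset.sum_congr rfl fun a _ => ?_
          rw [hYdef]
          simp only []
          rw [Finset.sum_mul]
          refine Finset.sum_congr rfl fun j _ => ?_
          by_cases h : s j = a <;> simp [h]
  have hnode : ∀ a, Y a * g a ≤ L a := by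
    intro a
    rcases eq_or_lt_of_le (hYnn a) with h0 | hYpos
    · rw [← h0, zero_mul]
      exact hLnn a
    · have hW : G.Wmass s a = L a + Y a := hWLY a
      have hWpos' : 0 < G.Wmass s a := by
        have := hLnn a
        rw [hW]; linarith
      have hYne : Y a ≠ 0 := ne_of_gt hYpos
      have hlog : Real.log (G.Wmass s a / Y a) ≤ G.Wmass s a / Y a - 1 :=
        Real.log_le_sub_one_of_pos (div_pos hWpos' hYpos)
      rw [Real.log_div (ne_of_gt hWpos') (ne_of_gt hYpos)] at hlog
      have hmul := mul_le_mul_of_nonneg_left hlog (hYnn a)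
      have heq : Y a * (G.Wmass s a / Y a) = G.Wmass s a := by
        field_simp
      have heq2 : Y a * (G.Wmass s a / Y a - 1) = L a := by
        rw [mul_sub, heq, mul_one, hW]
        ring
      rw [hgdef]
      simp only []
      linarith
  have hBsum : ∑ j ∈ Iᶜ, G.w j * Real.log (G.cost s' j) ≤
      ∑ j ∈ Iᶜ, G.w j * Real.log (G.cost s j) + ∑ i ∈ I, G.w i := by
    have h1 : ∑ j ∈ Iᶜ, G.w j * Real.log (G.cost s' j) ≤
        ∑ j ∈ Iᶜ, (G.w j * Real.log (G.cost s j) + G.w j * g (s j)) :=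
      Finset.sum_le_sum hB
    rw [Finset.sum_add_distrib] at h1
    have h2 : ∑ j ∈ Iᶜ, G.w j * g (s j) ≤ ∑ i ∈ I, G.w i := by
      rw [hgroup]
      have h3 : ∑ a, Y a * g a ≤ ∑ a, L a := Finset.sum_le_sum fun a _ => hnode a
      have h4 : ∑ a, L a = ∑ i ∈ I, G.w i := by
        rw [hLdef]
        simp only []
        rw [Finset.sum_comm]
        refine Finset.sum_congr rfl fun i _ => ?_
        rw [Finset.sum_ite_eq]
        simp
      linarith
    linarith
  -- assemble: the potential strictly decreases, contradiction
  have hsplit : ∀ t : A → V, ∑ i, G.w i * Real.log (G.cost t i)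
      = ∑ i ∈ I, G.w i * Real.log (G.cost t i) + ∑ i ∈ Iᶜ, G.w i * Real.log (G.cost t i) :=
    fun t => (Finset.sum_add_sum_compl I _).symm
  have hfinal : ∑ i, G.w i * Real.log (G.cost s' i) < ∑ i, G.w i * Real.log (G.cost s i) := by
    rw [hsplit s', hsplit s]
    rw [Finset.sum_sub_distrib] at hAsum
    linarith
  exact absurd (hmin s') (not_le.mpr hfinal)
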